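/- Assume in addition that β > 0. Then there exists a unique pure Nash equilibrium, i.e., a unique pair (g*, h*) ∈ [0, s̲] × [s̄, 1] such that f(g*, h) ≤ f(g*, h*) for every h ∈ [s̄, 1] and f(g*, h*) ≤ f(g, h*) for every g ∈ [0, s̲]. (Theorem 2.) -/

import Mathlib

noncomputable def nashQ (lam β γ shat chi g x y : ℝ) : ℝ :=
  γ^2*x*y - γ*(1-lam+g*γ)*(x+y) +
    ((γ*shat+β)*(1-lam+g*γ) + γ*((1-2*β-g*γ)*shat - chi + g*β + g^2*γ))

noncomputable def nashR (lam β γ shat chi h x y : ℝ) : ℝ :=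
  γ^2*x*y + γ*(1-lam-h*γ)*(x+y) +
    ((β-γ*shat)*(1-lam-h*γ) - γ*((1-2*β+h*γ)*shat - chi + h*β - h^2*γ))

noncomputable def nashM (lam β γ shat chi g : ℝ) : ℝ :=
  (1-lam+g*γ)^2 - ((γ*shat+β)*(1-lam+g*γ) + γ*((1-2*β-g*γ)*shat - chi + g*β + g^2*γ))

noncomputable def nashM' (lam β γ shat chi h : ℝ) : ℝ :=
  (1-lam-h*γ)^2 - ((β-γ*shat)*(1-lam-h*γ) - γ*((1-2*β+h*γ)*shat - chi + h*β - h^2*γ))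

lemma nashQ_symm (lam β γ shat chi g x y : ℝ) :
    nashQ lam β γ shat chi g x y = nashQ lam β γ shat chi g y x := by
  unfold nashQ; ring

lemma nashR_symm (lam β γ shat chi h x y : ℝ) :
    nashR lam β γ shat chi h x y = nashR lam β γ shat chi h y x := by
  unfold nashR; ring

lemma nashQ_factor (lam β γ shat chi g x y : ℝ) :
    nashQ lam β γ shat chi g x y =
      ((1-lam+g*γ) - γ*x) * ((1-lam+g*γ) - γ*y) - nashM lam β γ shat chi g := by
  unfold nashQ nashM; ring

lemma nashR_factor (lam β γ shat chi h x y : ℝ) :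
    nashR lam β γ shat chi h x y =
      (γ*x + (1-lam-h*γ)) * (γ*y + (1-lam-h*γ)) - nashM' lam β γ shat chi h := by
  unfold nashR nashM'; ring

lemma key_h (lam β γ shat chi Cc : ℝ) (f : ℝ → ℝ → ℝ)
    (hf : ∀ g h, f g h = Cc * ((1 - 2*β + (h - g)*γ)*shat - chi + (h + g)*β + (g^2 - h^2)*γ)
        / (1 - lam + (g - h)*γ))
    (g h1 h2 : ℝ) (hd1 : 1 - lam + (g - h1)*γ ≠ 0) (hd2 : 1 - lam + (g - h2)*γ ≠ 0) :
    f g h2 - f g h1 = Cc * ((h2 - h1) * nashQ lam β γ shat chi g h1 h2) /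
      ((1 - lam + (g - h1)*γ) * (1 - lam + (g - h2)*γ)) := by
  rw [hf, hf]; unfold nashQ; rw [div_sub_div _ _ hd2 hd1, div_eq_div_iff (mul_ne_zero hd2 hd1) (mul_ne_zero hd1 hd2)]; ring

lemma key_g (lam β γ shat chi Cc : ℝ) (f : ℝ → ℝ → ℝ)
    (hf : ∀ g h, f g h = Cc * ((1 - 2*β + (h - g)*γ)*shat - chi + (h + g)*β + (g^2 - h^2)*γ)
        / (1 - lam + (g - h)*γ))
    (h g1 g2 : ℝ) (hd1 : 1 - lam + (g1 - h)*γ ≠ 0) (hd2 : 1 - lam + (g2 - h)*γ ≠ 0) :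
    f g2 h - f g1 h = Cc * ((g2 - g1) * nashR lam β γ shat chi h g1 g2) /
      ((1 - lam + (g1 - h)*γ) * (1 - lam + (g2 - h)*γ)) := by
  rw [hf, hf]; unfold nashR; rw [div_sub_div _ _ hd2 hd1, div_eq_div_iff (mul_ne_zero hd2 hd1) (mul_ne_zero hd1 hd2)]; ring
set_option maxHeartbeats 2000000 in
theorem nash_aux (lam β γ slo shi shat chi Cc : ℝ)
    (hCc : 0 < Cc) (hγ0 : 0 ≤ γ) (hβ : 0 < β)
    (hslo0 : 0 ≤ slo) (hss : slo ≤ shi) (hshi1 : shi ≤ 1)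
    (h4γ : 4*γ ≤ 1 - lam) (hβ2 : 2*β ≤ 1 - lam)
    (f : ℝ → ℝ → ℝ)
    (hf : ∀ g h, f g h = Cc * ((1 - 2*β + (h - g)*γ)*shat - chi + (h + g)*β + (g^2 - h^2)*γ)
        / (1 - lam + (g - h)*γ)) :
    ∃! p : ℝ × ℝ, p.1 ∈ Set.Icc (0:ℝ) slo ∧ p.2 ∈ Set.Icc shi 1 ∧
      (∀ h ∈ Set.Icc shi 1, f p.1 h ≤ f p.1 p.2) ∧
      (∀ g ∈ Set.Icc (0:ℝ) slo, f p.1 p.2 ≤ f g p.2) := by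
  have hlam : 0 < 1 - lam := by linarith
  have hD : ∀ g h : ℝ, 0 ≤ g → h ≤ 1 → 0 < 1 - lam + (g - h) * γ := by
    intro g h hg hh
    nlinarith [mul_nonneg hγ0 (by linarith : (0:ℝ) ≤ g - h + 1)]
  have sign_iff : ∀ X Y : ℝ, 0 < Y → (0 ≤ Cc * X / Y ↔ 0 ≤ X) := by
    intro X Y hY
    constructor
    · intro h
      by_contra hX
      push_neg at hX
      have : Cc * X / Y < 0 := div_neg_of_neg_of_pos (mul_neg_of_pos_of_neg hCc hX) hY
      linarith
    · intro h; exact div_nonneg (mul_nonneg hCc.le h) hY.le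
  have mono_h : ∀ g h1 h2 : ℝ, 0 ≤ g → h1 ≤ 1 → h2 ≤ 1 →
      (f g h1 ≤ f g h2 ↔ 0 ≤ (h2 - h1) * nashQ lam β γ shat chi g h1 h2) := by
    intro g h1 h2 hg hh1 hh2
    have d1 := hD g h1 hg hh1
    have d2 := hD g h2 hg hh2
    rw [← sub_nonneg, key_h lam β γ shat chi Cc f hf g h1 h2 d1.ne' d2.ne']
    exact sign_iff _ _ (mul_pos d1 d2)
  have mono_g : ∀ h g1 g2 : ℝ, 0 ≤ g1 → 0 ≤ g2 → h ≤ 1 →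
      (f g1 h ≤ f g2 h ↔ 0 ≤ (g2 - g1) * nashR lam β γ shat chi h g1 g2) := by
    intro h g1 g2 hg1 hg2 hh
    have d1 := hD g1 h hg1 hh
    have d2 := hD g2 h hg2 hh
    rw [← sub_nonneg, key_g lam β γ shat chi Cc f hf h g1 g2 d1.ne' d2.ne']
    exact sign_iff _ _ (mul_pos d1 d2)
  -- uniqueness helpers
  have huniq_h : ∀ g h1 h2 : ℝ, g ∈ Set.Icc (0:ℝ) slo → h1 ∈ Set.Icc shi 1 →
      h2 ∈ Set.Icc shi 1 → h1 < h2 →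
      (∀ h ∈ Set.Icc shi 1, f g h ≤ f g h1) → f g h1 = f g h2 → False := by
    intro g h1 h2 hg hh1 hh2 hlt hmax heq
    have hQ12 : nashQ lam β γ shat chi g h1 h2 = 0 := by
      have a1 : 0 ≤ (h2 - h1) * nashQ lam β γ shat chi g h1 h2 :=
        (mono_h g h1 h2 hg.1 hh1.2 hh2.2).mp heq.le
      have a2 : 0 ≤ (h1 - h2) * nashQ lam β γ shat chi g h2 h1 :=
        (mono_h g h2 h1 hg.1 hh2.2 hh1.2).mp heq.ge
      rw [nashQ_symm] at a2
      nlinarith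
    set hm := (h1 + h2) / 2 with hhm
    have hhmm : hm ∈ Set.Icc shi 1 := ⟨by simp only [hhm]; cases hh1; cases hh2; linarith,
      by simp only [hhm]; cases hh1; cases hh2; linarith⟩
    have hQm : nashQ lam β γ shat chi g hm h1 ≤ 0 := by
      have a1 : 0 ≤ (h1 - hm) * nashQ lam β γ shat chi g hm h1 :=
        (mono_h g hm h1 hg.1 hhmm.2 hh1.2).mp (hmax hm hhmm)
      nlinarith [a1, hlt]
    have hrel : nashQ lam β γ shat chi g hm h1 =
        nashQ lam β γ shat chi g h1 h2 + ((h2 - h1)/2) * (γ * ((1-lam+g*γ) - γ*h1)) := by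
      rw [hhm]; unfold nashQ; ring
    have hE : 0 < (1-lam+g*γ) - γ*h1 := by
      have : γ * h1 ≤ γ * 1 := mul_le_mul_of_nonneg_left hh1.2 hγ0
      nlinarith [mul_nonneg hγ0 hg.1]
    have hX : γ * ((1-lam+g*γ) - γ*h1) = 0 := by
      have hXnn : 0 ≤ γ * ((1-lam+g*γ) - γ*h1) := mul_nonneg hγ0 hE.le
      nlinarith [hQm, hrel, hQ12]
    have hγz : γ = 0 := by
      rcases mul_eq_zero.mp hX with h | h
      · exact h
      · exact absurd h hE.ne'
    rw [hγz] at hQ12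
    unfold nashQ at hQ12
    ring_nf at hQ12
    nlinarith [hQ12, mul_pos hβ hlam]
  have huniq_g : ∀ h g1 g2 : ℝ, h ∈ Set.Icc shi 1 → g1 ∈ Set.Icc (0:ℝ) slo →
      g2 ∈ Set.Icc (0:ℝ) slo → g1 < g2 →
      (∀ g ∈ Set.Icc (0:ℝ) slo, f g1 h ≤ f g h) → f g1 h = f g2 h → False := by
    intro h g1 g2 hh hg1 hg2 hlt hmin heq
    have hR12 : nashR lam β γ shat chi h g1 g2 = 0 := by
      have a1 : 0 ≤ (g2 - g1) * nashR lam β γ shat chi h g1 g2 :=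
        (mono_g h g1 g2 hg1.1 hg2.1 hh.2).mp heq.le
      have a2 : 0 ≤ (g1 - g2) * nashR lam β γ shat chi h g2 g1 :=
        (mono_g h g2 g1 hg2.1 hg1.1 hh.2).mp heq.ge
      rw [nashR_symm] at a2
      nlinarith
    set gm := (g1 + g2) / 2 with hgm
    have hgmm : gm ∈ Set.Icc (0:ℝ) slo := ⟨by simp only [hgm]; cases hg1; cases hg2; linarith,
      by simp only [hgm]; cases hg1; cases hg2; linarith⟩
    have hRm : 0 ≤ nashR lam β γ shat chi h g1 gm := by
      have a1 : 0 ≤ (gm - g1) * nashR lam β γ shat chi h g1 gm :=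
        (mono_g h g1 gm hg1.1 hgmm.1 hh.2).mp (hmin gm hgmm)
      nlinarith [a1, hlt]
    have hrel : nashR lam β γ shat chi h g1 gm =
        nashR lam β γ shat chi h g1 g2 - ((g2 - g1)/2) * (γ * (γ*g1 + (1-lam-h*γ))) := by
      rw [hgm]; unfold nashR; ring
    have hE : 0 < γ*g1 + (1-lam-h*γ) := by
      have : γ * h ≤ γ * 1 := mul_le_mul_of_nonneg_left hh.2 hγ0
      nlinarith [mul_nonneg hγ0 hg1.1]
    have hX : γ * (γ*g1 + (1-lam-h*γ)) = 0 := by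
      have hXnn : 0 ≤ γ * (γ*g1 + (1-lam-h*γ)) := mul_nonneg hγ0 hE.le
      nlinarith [hRm, hrel, hR12]
    have hγz : γ = 0 := by
      rcases mul_eq_zero.mp hX with h' | h'
      · exact h'
      · exact absurd h' hE.ne'
    rw [hγz] at hR12
    unfold nashR at hR12
    ring_nf at hR12
    nlinarith [hR12, mul_pos hβ hlam]
  -- existence
  have hex : ∃ g1 h1 : ℝ, g1 ∈ Set.Icc (0:ℝ) slo ∧ h1 ∈ Set.Icc shi 1 ∧
      (∀ h ∈ Set.Icc shi 1, f g1 h ≤ f g1 h1) ∧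
      (∀ g ∈ Set.Icc (0:ℝ) slo, f g1 h1 ≤ f g h1) := by
    rcases hγ0.eq_or_lt with hγz | hγpos
    · -- γ = 0 : NE is (0,1)
      refine ⟨0, 1, ⟨le_refl _, hslo0⟩, ⟨hshi1, le_refl _⟩, ?_, ?_⟩
      · intro h hh
        rw [mono_h 0 h 1 le_rfl hh.2 le_rfl]
        have hq : nashQ lam β 0 shat chi 0 h 1 = β * (1 - lam) := by unfold nashQ; ring
        rw [← hγz, hq]
        have := hh.2
        nlinarith [mul_pos hβ hlam]
      · intro g hg
        rw [mono_g 1 0 g le_rfl hg.1 le_rfl]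
        have hq : nashR lam β 0 shat chi 1 0 g = β * (1 - lam) := by unfold nashR; ring
        rw [← hγz, hq]
        nlinarith [mul_pos hβ hlam, hg.1]
    · -- γ > 0
      set sq : ℝ → ℝ := fun g => Real.sqrt (max (nashM lam β γ shat chi g) 0) with hsq
      set H : ℝ → ℝ := fun g => max shi (min 1 (g + (1 - lam)/γ - sq g / γ)) with hH
      set sq' : ℝ → ℝ := fun h => Real.sqrt (max (nashM' lam β γ shat chi h) 0) with hsq'
      set G : ℝ → ℝ := fun h => max 0 (min slo (sq' h / γ - ((1 - lam)/γ - h))) with hG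
      have hsqnn : ∀ g, 0 ≤ sq g := fun g => Real.sqrt_nonneg _
      have hsqsq : ∀ g, sq g ^ 2 = max (nashM lam β γ shat chi g) 0 := fun g =>
        Real.sq_sqrt (le_max_right _ _)
      have hsqnn' : ∀ h, 0 ≤ sq' h := fun h => Real.sqrt_nonneg _
      have hsqsq' : ∀ h, sq' h ^ 2 = max (nashM' lam β γ shat chi h) 0 := fun h =>
        Real.sq_sqrt (le_max_right _ _)
      have hHmem : ∀ g, H g ∈ Set.Icc shi 1 :=
        fun g => ⟨le_max_left _ _, max_le hshi1 (min_le_left _ _)⟩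
      have hGmem : ∀ h, G h ∈ Set.Icc (0:ℝ) slo :=
        fun h => ⟨le_max_left _ _, max_le hslo0 (min_le_left _ _)⟩
      have hroot : ∀ g : ℝ, γ * (g + (1 - lam)/γ - sq g / γ) = (1 - lam + g*γ) - sq g := by
        intro g; field_simp; ring
      have hroot' : ∀ h : ℝ, γ * (sq' h / γ - ((1 - lam)/γ - h)) = sq' h - (1 - lam - h*γ) := by
        intro h; field_simp
      -- H g is a best response
      have hHbest : ∀ g ∈ Set.Icc (0:ℝ) slo, ∀ h ∈ Set.Icc shi 1, f g h ≤ f g (H g) := by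
        intro g hg h hh
        rw [mono_h g h (H g) hg.1 hh.2 (hHmem g).2, nashQ_factor]
        rcases le_total h (H g) with hc | hc
        · -- need Q ≥ 0
          rcases le_total shi (g + (1 - lam)/γ - sq g / γ) with hr | hr
          · have hH1 : H g ≤ g + (1 - lam)/γ - sq g / γ :=
              max_le hr (min_le_right _ _)
            have k1 : sq g ≤ (1 - lam + g*γ) - γ * H g := by
              have := mul_le_mul_of_nonneg_left hH1 hγpos.le
              rw [hroot g] at this
              nlinarith
            have k2 : γ * h ≤ γ * H g := mul_le_mul_of_nonneg_left hc hγpos.le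
            have k3 : nashM lam β γ shat chi g ≤ sq g ^ 2 := by
              rw [hsqsq g]; exact le_max_left _ _
            apply mul_nonneg (by linarith)
            nlinarith [hsqnn g, k1, k2, k3]
          · -- H g = shi, so h = H g
            have hHs : H g = shi := max_eq_left (le_trans (min_le_right _ _) hr)
            have heq : h = H g := le_antisymm hc (hHs ▸ hh.1)
            rw [heq]; simp
        · -- h ≥ H g : need Q ≤ 0
          rcases le_total (g + (1 - lam)/γ - sq g / γ) 1 with hr | hr
          · have hH1 : g + (1 - lam)/γ - sq g / γ ≤ H g := by
              rw [hH]; simp only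
              rw [min_eq_right hr]
              exact le_max_right _ _
            have k1 : (1 - lam + g*γ) - γ * H g ≤ sq g := by
              have := mul_le_mul_of_nonneg_left hH1 hγpos.le
              rw [hroot g] at this
              nlinarith
            have k2 : γ * H g ≤ γ * h := mul_le_mul_of_nonneg_left hc hγpos.le
            have kh : γ * h ≤ γ := by nlinarith [hh.2]
            have kH : γ * H g ≤ γ := by nlinarith [(hHmem g).2]
            have hpos1 : 0 < (1 - lam + g*γ) - γ * h := by
              nlinarith [mul_nonneg hγ0 hg.1]
            have hpos2 : 0 < (1 - lam + g*γ) - γ * H g := by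
              nlinarith [mul_nonneg hγ0 hg.1]
            have hsqpos : 0 < sq g := lt_of_lt_of_le hpos2 k1
            have hMpos : 0 < nashM lam β γ shat chi g := by
              have h1 : 0 < max (nashM lam β γ shat chi g) 0 := by
                rw [← hsqsq g]; positivity
              rcases le_or_gt (nashM lam β γ shat chi g) 0 with hM | hM
              · rw [max_eq_right hM] at h1; linarith
              · exact hM
            have hMeq : sq g ^ 2 = nashM lam β γ shat chi g := by
              rw [hsqsq g, max_eq_left hMpos.le]
            have hQle : ((1 - lam + g*γ) - γ*h) * ((1 - lam + g*γ) - γ*(H g)) -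
                nashM lam β γ shat chi g ≤ 0 := by
              nlinarith [k1, k2, hpos1, hpos2, hMeq]
            nlinarith [mul_nonneg (sub_nonneg.mpr hc) (neg_nonneg.mpr hQle)]
          · -- H g = 1, so h = H g
            have hHs : H g = 1 := by
              rw [hH]; simp only
              rw [min_eq_left hr, max_eq_right hshi1]
            have heq : h = H g := le_antisymm (hHs ▸ hh.2) hc
            rw [heq]; simp
      -- G h is a best response
      have hGbest : ∀ h ∈ Set.Icc shi 1, ∀ g ∈ Set.Icc (0:ℝ) slo, f (G h) h ≤ f g h := by
        intro h hh g hg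
        rw [mono_g h (G h) g (hGmem h).1 hg.1 hh.2, nashR_factor]
        rcases le_total (G h) g with hc | hc
        · -- need R ≥ 0
          rcases le_total (sq' h / γ - ((1 - lam)/γ - h)) slo with hr | hr
          · have hG1 : sq' h / γ - ((1 - lam)/γ - h) ≤ G h := by
              rw [hG]; simp only
              rw [min_eq_right hr]
              exact le_max_right _ _
            have k1 : sq' h ≤ γ * G h + (1 - lam - h*γ) := by
              have := mul_le_mul_of_nonneg_left hG1 hγpos.le
              rw [hroot' h] at this
              nlinarith
            have k2 : γ * G h ≤ γ * g := mul_le_mul_of_nonneg_left hc hγpos.le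
            have k3 : nashM' lam β γ shat chi h ≤ sq' h ^ 2 := by
              rw [hsqsq' h]; exact le_max_left _ _
            apply mul_nonneg (by linarith)
            nlinarith [hsqnn' h, k1, k2, k3]
          · -- G h = slo, so g = G h
            have hGs : G h = slo := by
              rw [hG]; simp only
              rw [min_eq_left hr, max_eq_right hslo0]
            have heq : g = G h := le_antisymm (by rw [hGs]; exact hg.2) hc
            rw [heq]; simp
        · -- g ≤ G h : need R ≤ 0
          rcases le_total 0 (sq' h / γ - ((1 - lam)/γ - h)) with hr | hr
          · have hG1 : G h ≤ sq' h / γ - ((1 - lam)/γ - h) :=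
              max_le hr (min_le_right _ _)
            have k1 : γ * G h + (1 - lam - h*γ) ≤ sq' h := by
              have := mul_le_mul_of_nonneg_left hG1 hγpos.le
              rw [hroot' h] at this
              nlinarith
            have k2 : γ * g ≤ γ * G h := mul_le_mul_of_nonneg_left hc hγpos.le
            have kh : γ * h ≤ γ := by nlinarith [hh.2]
            have hpos1 : 0 < γ * g + (1 - lam - h*γ) := by
              nlinarith [mul_nonneg hγ0 hg.1]
            have hpos2 : 0 < γ * G h + (1 - lam - h*γ) := by
              nlinarith [mul_nonneg hγ0 (hGmem h).1]
            have hsqpos : 0 < sq' h := lt_of_lt_of_le hpos2 k1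
            have hMpos : 0 < nashM' lam β γ shat chi h := by
              have h1 : 0 < max (nashM' lam β γ shat chi h) 0 := by
                rw [← hsqsq' h]; positivity
              rcases le_or_gt (nashM' lam β γ shat chi h) 0 with hM | hM
              · rw [max_eq_right hM] at h1; linarith
              · exact hM
            have hMeq : sq' h ^ 2 = nashM' lam β γ shat chi h := by
              rw [hsqsq' h, max_eq_left hMpos.le]
            have hQle : (γ*(G h) + (1 - lam - h*γ)) * (γ*g + (1 - lam - h*γ)) -
                nashM' lam β γ shat chi h ≤ 0 := by
              nlinarith [k1, k2, hpos1, hpos2, hMeq]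
            nlinarith [mul_nonneg (sub_nonneg.mpr hc) (neg_nonneg.mpr hQle)]
          · -- G h = 0, so g = G h
            have hGs : G h = 0 := by
              rw [hG]; simp only
              rw [min_eq_right (le_trans hr hslo0), max_eq_left hr]
            have heq : g = G h := le_antisymm hc (by rw [hGs]; exact hg.1)
            rw [heq]; simp
      -- continuity and fixed point
      have hMcont : Continuous (fun g => nashM lam β γ shat chi g) := by
        unfold nashM; fun_prop
      have hMcont' : Continuous (fun h => nashM' lam β γ shat chi h) := by
        unfold nashM'; fun_prop
      have hsqcont : Continuous sq := by
        rw [hsq]; exact Real.continuous_sqrt.comp (hMcont.max continuous_const)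
      have hsqcont' : Continuous sq' := by
        rw [hsq']; exact Real.continuous_sqrt.comp (hMcont'.max continuous_const)
      have hHcont : Continuous H := by
        rw [hH]
        exact continuous_const.max (continuous_const.min
          (((continuous_id.add continuous_const).sub (hsqcont.div_const γ))))
      have hGcont : Continuous G := by
        rw [hG]
        exact continuous_const.max (continuous_const.min
          ((hsqcont'.div_const γ).sub (continuous_const.sub continuous_id)))
      set T : ℝ → ℝ := fun g => G (H g) - g with hT
      have hTcont : Continuous T := by
        rw [hT]; exact (hGcont.comp hHcont).sub continuous_id
      have hT0 : 0 ≤ T 0 := by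
        rw [hT]; simpa using (hGmem (H 0)).1
      have hTslo : T slo ≤ 0 := by
        rw [hT]; simp only; linarith [(hGmem (H slo)).2]
      have hmem0 : (0:ℝ) ∈ Set.Icc (T slo) (T 0) := ⟨hTslo, hT0⟩
      obtain ⟨g0, hg0mem, hg0fix⟩ :=
        intermediate_value_Icc' hslo0 hTcont.continuousOn hmem0
      have hfix : G (H g0) = g0 := by
        have : G (H g0) - g0 = 0 := hg0fix
        linarith
      refine ⟨g0, H g0, hg0mem, hHmem g0, hHbest g0 hg0mem, ?_⟩
      intro g hg
      have := hGbest (H g0) (hHmem g0) g hg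
      rwa [hfix] at this

  obtain ⟨g1, h1, hg1, hh1, hmax1, hmin1⟩ := hex
  refine ⟨(g1, h1), ⟨hg1, hh1, hmax1, hmin1⟩, ?_⟩
  rintro ⟨g2, h2⟩ ⟨hg2, hh2, hmax2, hmin2⟩
  simp only [Prod.mk.injEq]
  -- all four values are equal
  have e1 : f g1 h2 ≤ f g1 h1 := hmax1 h2 hh2
  have e2 : f g1 h1 ≤ f g2 h1 := hmin1 g2 hg2
  have e3 : f g2 h1 ≤ f g2 h2 := hmax2 h1 hh1
  have e4 : f g2 h2 ≤ f g1 h2 := hmin2 g1 hg1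
  have q12 : f g1 h1 = f g1 h2 := le_antisymm (by linarith) e1
  have hheq : h1 = h2 := by
    rcases lt_trichotomy h1 h2 with hlt | heq | hgt
    · exact absurd (huniq_h g1 h1 h2 hg1 hh1 hh2 hlt hmax1 q12) id
    · exact heq
    · refine absurd (huniq_h g1 h2 h1 hg1 hh2 hh1 hgt ?_ q12.symm) id
      intro h hh
      exact le_trans (hmax1 h hh) q12.le
  subst hheq
  have q2 : f g1 h1 = f g2 h1 := le_antisymm e2 (by linarith)
  have hgeq : g1 = g2 := by
    rcases lt_trichotomy g1 g2 with hlt | heq | hgt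
    · exact absurd (huniq_g h1 g1 g2 hh1 hg1 hg2 hlt hmin1 q2) id
    · exact heq
    · exact absurd (huniq_g h1 g2 g1 hh1 hg2 hg1 hgt hmin2 q2.symm) id
  exact ⟨hgeq.symm, rfl⟩
theorem stmt_11
    (n : ℕ) (hn : 1 ≤ n)
    (W : Matrix (Fin n) (Fin n) ℝ) (hW : ∀ i j, 0 ≤ W i j)
    (c : Fin n → ℝ) (hc : ∀ i, 0 < c i)
    (lam : ℝ) (hlam0 : 0 ≤ lam) (hlam1 : lam < 1)
    (hWc : W.transpose.mulVec c = lam • c)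
    (s : Fin n → ℝ) (hs : ∀ i, s i ∈ Set.Icc (0:ℝ) 1)
    (β γ : ℝ) (hγ0 : 0 ≤ γ) (hγβ : γ ≤ β)
    (hnorm : max (2*β) (4*γ) ≤ 1 -
      max (Finset.univ.sup' (Finset.univ_nonempty_iff.mpr (Fin.pos_iff_nonempty.mp hn)) (fun i => ∑ j, |W i j|))
          (Finset.univ.sup' (Finset.univ_nonempty_iff.mpr (Fin.pos_iff_nonempty.mp hn)) (fun j => ∑ i, |W i j|)))
    (slo shi : ℝ)
    (hslo : slo = Finset.univ.inf' (Finset.univ_nonempty_iff.mpr (Fin.pos_iff_nonempty.mp hn)) s)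
    (hshi : shi = Finset.univ.sup' (Finset.univ_nonempty_iff.mpr (Fin.pos_iff_nonempty.mp hn)) s)
    (Cc shat chi : ℝ)
    (hCc : Cc = ∑ i, c i)
    (hshat : shat = ∑ i, (c i / Cc) * s i)
    (hchi : chi = ∑ i, (c i / Cc) * s i * (∑ j, W i j))
    (f : ℝ → ℝ → ℝ)
    (hf : ∀ g h, f g h = Cc * ((1 - 2*β + (h - g)*γ)*shat - chi + (h + g)*β + (g^2 - h^2)*γ)
        / (1 - lam + (g - h)*γ))
    (isNE : ℝ → ℝ → Prop)
    (hisNE : ∀ a b, isNE a b ↔ (a ∈ Set.Icc (0:ℝ) slo ∧ b ∈ Set.Icc shi 1 ∧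
      (∀ h ∈ Set.Icc shi 1, f a h ≤ f a b) ∧ (∀ g ∈ Set.Icc (0:ℝ) slo, f a b ≤ f g b)))
    (hβpos : 0 < β) :
    ∃! p : ℝ × ℝ, isNE p.1 p.2 := by
  have hne : (Finset.univ : Finset (Fin n)).Nonempty :=
    Finset.univ_nonempty_iff.mpr (Fin.pos_iff_nonempty.mp hn)
  have hCcpos : 0 < Cc := by
    rw [hCc]; exact Finset.sum_pos (fun i _ => hc i) hne
  have hslo0 : 0 ≤ slo := by
    rw [hslo]; exact Finset.le_inf' _ _ (fun i _ => (hs i).1)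
  have hshi1 : shi ≤ 1 := by
    rw [hshi]; exact Finset.sup'_le _ _ (fun i _ => (hs i).2)
  have hss : slo ≤ shi := by
    obtain ⟨i0, hi0⟩ := hne
    rw [hslo, hshi]
    exact le_trans (Finset.inf'_le s hi0) (Finset.le_sup' s hi0)
  -- lam is at most the max row sum
  set minf : ℝ := Finset.univ.sup' hne (fun i => ∑ j, |W i j|) with hminf
  have hrow : ∀ j, (∑ i, W i j * c i) = lam * c j := by
    intro j
    have := congrFun hWc j
    simpa [Matrix.mulVec, Matrix.transpose_apply, dotProduct] using this
  have hsum : lam * (∑ j, c j) = ∑ i, (∑ j, W i j) * c i := by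
    have h1 : ∑ j, (∑ i, W i j * c i) = ∑ i, (∑ j, W i j) * c i := by
      rw [Finset.sum_comm]
      exact Finset.sum_congr rfl (fun i _ => (Finset.sum_mul _ _ _).symm)
    rw [← h1, Finset.mul_sum]
    exact Finset.sum_congr rfl (fun j _ => (hrow j).symm)
  have hlam_le : lam ≤ minf := by
    have hle : ∀ i, (∑ j, W i j) * c i ≤ minf * c i := by
      intro i
      apply mul_le_mul_of_nonneg_right _ (hc i).le
      have : (∑ j, W i j) = ∑ j, |W i j| := by
        congr 1; ext j; rw [abs_of_nonneg (hW i j)]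
      rw [this, hminf]
      exact Finset.le_sup' (fun i => ∑ j, |W i j|) (Finset.mem_univ i)
    have h2 : lam * (∑ j, c j) ≤ minf * (∑ j, c j) := by
      rw [hsum, Finset.mul_sum]
      exact Finset.sum_le_sum (fun i _ => hle i)
    have h3 : 0 < ∑ j, c j := Finset.sum_pos (fun i _ => hc i) hne
    exact le_of_mul_le_mul_right h2 h3
  have h4γ : 4*γ ≤ 1 - lam := by
    have h1 : 4*γ ≤ max (2*β) (4*γ) := le_max_right _ _
    have h2 : minf ≤ max minf (Finset.univ.sup' hne (fun j => ∑ i, |W i j|)) := le_max_left _ _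
    linarith [hnorm]
  have hβ2 : 2*β ≤ 1 - lam := by
    have h1 : 2*β ≤ max (2*β) (4*γ) := le_max_left _ _
    have h2 : minf ≤ max minf (Finset.univ.sup' hne (fun j => ∑ i, |W i j|)) := le_max_left _ _
    linarith [hnorm]
  obtain ⟨p, hp, hup⟩ := nash_aux lam β γ slo shi shat chi Cc hCcpos hγ0 hβpos
    hslo0 hss hshi1 h4γ hβ2 f hf
  exact ⟨p, (hisNE p.1 p.2).mpr hp, fun q hq => hup q ((hisNE q.1 q.2).mp hq)⟩
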